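/- (Differentiability of the dual function.) Assume the SDR problem is strictly feasible and that for every x ∈ ℝ^M with x ≥ 0 componentwise, the subproblem defining d(x) attains its infimum at a unique point (V*₁(x), …, V*_K(x), Q*(x)). Then d is differentiable on the nonnegative orthant ℝ₊^M (at boundary points, differentiability is understood within ℝ₊^M), and for every x ≥ 0 and every m = 1,…,M the m-th component of the gradient is (∇d(x))_m = Σ_{k=1}^K V*_k(x)^{(m,m)} + Q*(x)^{(m,m)} − P̄_m. -/

import Mathlib

open BigOperators Matrix ComplexOrder

noncomputable section

/-- The matrix `B_m(V, Q)` appearing in the fronthaul-rate constraint. -/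
def Bmat {M K : ℕ} (Cbar : Fin M → ℝ)
    (V : Fin K → Matrix (Fin M) (Fin M) ℂ) (Q : Matrix (Fin M) (Fin M) ℂ)
    (m : Fin M) : Matrix (Fin M) (Fin M) ℂ :=
  fun s t =>
    if s = m ∧ t = m then
      Q m m - (((2 : ℝ) ^ (-(Cbar m)) : ℝ) : ℂ) * ((∑ k, V k m m) + Q m m)
    else if m ≤ s ∧ m ≤ t then Q s t
    else 0

/-- Feasibility for the Lagrangian subproblem (no per-antenna power constraints). -/
def SubFeasible {M K : ℕ} (hvec : Fin K → Fin M → ℂ) (σ γbar : Fin K → ℝ)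
    (Cbar : Fin M → ℝ)
    (V : Fin K → Matrix (Fin M) (Fin M) ℂ) (Q : Matrix (Fin M) (Fin M) ℂ) : Prop :=
  (∀ k, (V k).PosSemidef) ∧ Q.PosSemidef ∧
  (∀ k, σ k ^ 2 ≤
    (star (hvec k) ⬝ᵥ
      ((((1 + 1 / γbar k : ℝ) : ℂ) • V k - (∑ j, V j) - Q) *ᵥ hvec k)).re) ∧
  (∀ m, (Bmat Cbar V Q m).PosSemidef)

/-- Objective of the Lagrangian subproblem for multiplier `x ≥ 0`. -/
def dualObj {M K : ℕ} (Pbar : Fin M → ℝ) (x : EuclideanSpace ℝ (Fin M))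
    (V : Fin K → Matrix (Fin M) (Fin M) ℂ) (Q : Matrix (Fin M) (Fin M) ℂ) : ℝ :=
  ∑ m, ((1 + x m) * ((∑ k, V k m m).re + (Q m m).re) - x m * Pbar m)

/-- The dual function `d(x)`: infimum of the subproblem objective over its feasible set. -/
def dfun {M K : ℕ} (hvec : Fin K → Fin M → ℂ) (σ γbar : Fin K → ℝ)
    (Cbar Pbar : Fin M → ℝ) (x : EuclideanSpace ℝ (Fin M)) : ℝ :=
  sInf {v : ℝ | ∃ (V : Fin K → Matrix (Fin M) (Fin M) ℂ)
    (Q : Matrix (Fin M) (Fin M) ℂ),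
      SubFeasible hvec σ γbar Cbar V Q ∧ v = dualObj Pbar x V Q}

/-- Feasibility for the SDR problem (with per-antenna power constraints). -/
def SDRFeasible {M K : ℕ} (hvec : Fin K → Fin M → ℂ) (σ γbar : Fin K → ℝ)
    (Cbar Pbar : Fin M → ℝ)
    (V : Fin K → Matrix (Fin M) (Fin M) ℂ) (Q : Matrix (Fin M) (Fin M) ℂ) : Prop :=
  SubFeasible hvec σ γbar Cbar V Q ∧
  (∀ m, (∑ k, V k m m).re + (Q m m).re ≤ Pbar m)

/-- Strict feasibility of the SDR problem. -/
def SDRStrictFeasible {M K : ℕ} (hvec : Fin K → Fin M → ℂ) (σ γbar : Fin K → ℝ)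
    (Cbar Pbar : Fin M → ℝ) : Prop :=
  ∃ (V : Fin K → Matrix (Fin M) (Fin M) ℂ) (Q : Matrix (Fin M) (Fin M) ℂ),
    SDRFeasible hvec σ γbar Cbar Pbar V Q ∧
    (∀ k, (V k).PosDef) ∧ Q.PosDef ∧
    (∀ k, σ k ^ 2 <
      (star (hvec k) ⬝ᵥ
        ((((1 + 1 / γbar k : ℝ) : ℂ) • V k - (∑ j, V j) - Q) *ᵥ hvec k)).re) ∧
    (∀ m, (∑ k, V k m m).re + (Q m m).re < Pbar m) ∧
    (∀ m : Fin M,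
      (((Bmat Cbar V Q m).submatrix
        (fun i : {s : Fin M // m ≤ s} => (i : Fin M))
        (fun i : {s : Fin M // m ≤ s} => (i : Fin M))).PosDef))

section auxlemmas

open Filter Topology

lemma diag_nonneg' {M : ℕ} {A : Matrix (Fin M) (Fin M) ℂ} (hA : A.PosSemidef) (s : Fin M) :
    0 ≤ A s s := by
  have h := hA.dotProduct_mulVec_nonneg (Pi.single s 1)
  have hstar : star ((Pi.single s 1 : Fin M → ℂ)) = Pi.single s 1 := by
    ext i; simp only [Pi.star_apply, Pi.single_apply]; split_ifs <;> simp
  rw [hstar] at h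
  simpa [Matrix.mulVec_single, single_dotProduct] using h

lemma diag_re_nonneg {M : ℕ} {A : Matrix (Fin M) (Fin M) ℂ} (hA : A.PosSemidef) (s : Fin M) :
    0 ≤ (A s s).re := by
  simpa [Complex.le_def] using (Complex.le_def.mp (diag_nonneg' hA s)).1

lemma entry_bound {M : ℕ} {A : Matrix (Fin M) (Fin M) ℂ} (hA : A.PosSemidef) (s t : Fin M) :
    2 * ‖A s t‖ ≤ (A s s).re + (A t t).re := by
  rcases eq_or_ne s t with rfl | hst
  · obtain ⟨hre, him⟩ := Complex.le_def.mp (diag_nonneg' hA s)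
    simp only [Complex.zero_re, Complex.zero_im] at hre him
    rw [Complex.norm_def, Complex.normSq_apply, ← him]
    simp only [mul_zero, add_zero]
    rw [Real.sqrt_mul_self hre]; linarith
  · have hherm : A t s = star (A s t) := by
      have := congrFun (congrFun hA.1 t) s
      simp only [Matrix.conjTranspose_apply] at this
      rw [← this]
    obtain ⟨p1, _⟩ := Complex.le_def.mp (diag_nonneg' hA s)
    obtain ⟨p2, _⟩ := Complex.le_def.mp (diag_nonneg' hA t)
    simp only [Complex.zero_re] at p1 p2
    rcases eq_or_ne (A s t) 0 with hz0 | hz0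
    · rw [hz0]; simp; linarith
    · have hrpos : 0 < ‖A s t‖ := norm_pos_iff.mpr hz0
      have hr2 : ‖A s t‖ ^ 2 = (A s t).re ^ 2 + (A s t).im ^ 2 := by
        rw [Complex.sq_norm, Complex.normSq_apply]; ring
      have hq := hA.re_dotProduct_nonneg
        ((Pi.single s ((‖A s t‖ : ℝ) : ℂ) : Fin M → ℂ) + (Pi.single t (-star (A s t)) : Fin M → ℂ))
      have hstar : star ((Pi.single s ((‖A s t‖ : ℝ) : ℂ) : Fin M → ℂ) + (Pi.single t (-star (A s t)) : Fin M → ℂ))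
          = (Pi.single s ((‖A s t‖ : ℝ) : ℂ) : Fin M → ℂ) + (Pi.single t (-(A s t)) : Fin M → ℂ) := by
        ext i
        simp only [Pi.star_apply, Pi.add_apply, Pi.single_apply]
        split_ifs <;> simp
      rw [hstar, Matrix.mulVec_add, Matrix.mulVec_single, Matrix.mulVec_single] at hq
      simp only [add_dotProduct, dotProduct_add, single_dotProduct,
        Pi.add_apply, hherm, RCLike.re_to_complex, Complex.star_def,
        Pi.smul_apply, Matrix.col_apply, op_smul_eq_mul] at hq
      simp only [Complex.add_re, Complex.mul_re, Complex.mul_im, Complex.neg_re, Complex.neg_im,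
        Complex.ofReal_re, Complex.ofReal_im, Complex.conj_re, Complex.conj_im] at hq
      nlinarith [hq, hr2, hrpos, mul_pos hrpos hrpos]

lemma cx_nonneg_of_tendsto {f : ℕ → ℂ} {z : ℂ} (h : Filter.Tendsto f atTop (𝓝 z))
    (h0 : ∀ n, 0 ≤ f n) : 0 ≤ z := by
  rw [Complex.le_def]
  refine ⟨?_, ?_⟩
  · have := ge_of_tendsto' ((Complex.continuous_re.tendsto z).comp h)
      (fun n => by simpa [Complex.le_def] using (Complex.le_def.mp (h0 n)).1)
    simpa using this
  · have h1 : Filter.Tendsto (fun n => (f n).im) atTop (𝓝 z.im) :=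
      (Complex.continuous_im.tendsto z).comp h
    have h2 : ∀ n, (f n).im = 0 := fun n => ((Complex.le_def.mp (h0 n)).2).symm
    simp only [h2] at h1
    simpa using (tendsto_nhds_unique h1 tendsto_const_nhds).symm

lemma quadform_tendsto {M : ℕ} {A : ℕ → Matrix (Fin M) (Fin M) ℂ} {L : Matrix (Fin M) (Fin M) ℂ}
    (h : ∀ s t, Filter.Tendsto (fun n => A n s t) atTop (𝓝 (L s t))) (x y : Fin M → ℂ) :
    Filter.Tendsto (fun n => x ⬝ᵥ (A n *ᵥ y)) atTop (𝓝 (x ⬝ᵥ (L *ᵥ y))) := by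
  simp only [dotProduct, Matrix.mulVec, Finset.mul_sum]
  exact tendsto_finset_sum _ fun s _ => tendsto_finset_sum _ fun t _ =>
    (tendsto_const_nhds.mul ((h s t).mul tendsto_const_nhds))

lemma psd_limit {M : ℕ} {A : ℕ → Matrix (Fin M) (Fin M) ℂ} {L : Matrix (Fin M) (Fin M) ℂ}
    (h : ∀ s t, Filter.Tendsto (fun n => A n s t) atTop (𝓝 (L s t)))
    (hp : ∀ n, (A n).PosSemidef) : L.PosSemidef := by
  rw [Matrix.posSemidef_iff_dotProduct_mulVec]
  constructor
  · ext s t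
    rw [Matrix.conjTranspose_apply]
    have h1 : Filter.Tendsto (fun n => star (A n t s)) atTop (𝓝 (star (L t s))) :=
      (continuous_star.tendsto _).comp (h t s)
    have h2 : ∀ n, star (A n t s) = A n s t := fun n => by
      have := congrFun (congrFun (hp n).1 s) t
      simpa [Matrix.conjTranspose_apply] using this
    simp only [h2] at h1
    exact tendsto_nhds_unique h1 (h s t)
  · intro x
    exact cx_nonneg_of_tendsto (quadform_tendsto h (star x) x) (fun n => (hp n).dotProduct_mulVec_nonneg x)

end auxlemmas

section auxlemmas2

open Filter Topology

lemma bmat_entry_tendsto {M K : ℕ} (Cbar : Fin M → ℝ)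
    {V : ℕ → Fin K → Matrix (Fin M) (Fin M) ℂ} {Q : ℕ → Matrix (Fin M) (Fin M) ℂ}
    {V' : Fin K → Matrix (Fin M) (Fin M) ℂ} {Q' : Matrix (Fin M) (Fin M) ℂ}
    (hV : ∀ k s t, Filter.Tendsto (fun n => V n k s t) atTop (𝓝 (V' k s t)))
    (hQ : ∀ s t, Filter.Tendsto (fun n => Q n s t) atTop (𝓝 (Q' s t)))
    (m s t : Fin M) :
    Filter.Tendsto (fun n => Bmat Cbar (V n) (Q n) m s t) atTop (𝓝 (Bmat Cbar V' Q' m s t)) := by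
  simp only [Bmat]
  split_ifs with h1 h2
  · exact (hQ m m).sub (tendsto_const_nhds.mul
      ((tendsto_finset_sum _ fun k _ => hV k m m).add (hQ m m)))
  · exact hQ s t
  · exact tendsto_const_nhds

lemma subfeasible_limit {M K : ℕ} (hvec : Fin K → Fin M → ℂ) (σ γbar : Fin K → ℝ)
    (Cbar : Fin M → ℝ)
    {V : ℕ → Fin K → Matrix (Fin M) (Fin M) ℂ} {Q : ℕ → Matrix (Fin M) (Fin M) ℂ}
    {V' : Fin K → Matrix (Fin M) (Fin M) ℂ} {Q' : Matrix (Fin M) (Fin M) ℂ}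
    (hV : ∀ k s t, Filter.Tendsto (fun n => V n k s t) atTop (𝓝 (V' k s t)))
    (hQ : ∀ s t, Filter.Tendsto (fun n => Q n s t) atTop (𝓝 (Q' s t)))
    (hf : ∀ n, SubFeasible hvec σ γbar Cbar (V n) (Q n)) :
    SubFeasible hvec σ γbar Cbar V' Q' := by
  refine ⟨fun k => psd_limit (hV k) (fun n => (hf n).1 k),
    psd_limit hQ (fun n => (hf n).2.1), fun k => ?_,
    fun m => psd_limit (fun s t => bmat_entry_tendsto Cbar hV hQ m s t)
      (fun n => (hf n).2.2.2 m)⟩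
  have hent : ∀ s t, Filter.Tendsto
      (fun n => ((((1 + 1 / γbar k : ℝ) : ℂ) • V n k - (∑ j, V n j) - Q n)) s t) atTop
      (𝓝 (((((1 + 1 / γbar k : ℝ) : ℂ) • V' k - (∑ j, V' j) - Q')) s t)) := by
    intro s t
    simp only [Matrix.sub_apply, Matrix.smul_apply, Matrix.sum_apply, smul_eq_mul]
    exact ((tendsto_const_nhds.mul (hV k s t)).sub
      (tendsto_finset_sum _ fun j _ => hV j s t)).sub (hQ s t)
  have := (Complex.continuous_re.tendsto _).comp (quadform_tendsto hent (star (hvec k)) (hvec k))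
  exact ge_of_tendsto' this (fun n => (hf n).2.2.1 k)

lemma dualObj_tendsto {M K : ℕ} (Pbar : Fin M → ℝ) (x : EuclideanSpace ℝ (Fin M))
    {V : ℕ → Fin K → Matrix (Fin M) (Fin M) ℂ} {Q : ℕ → Matrix (Fin M) (Fin M) ℂ}
    {V' : Fin K → Matrix (Fin M) (Fin M) ℂ} {Q' : Matrix (Fin M) (Fin M) ℂ}
    (hV : ∀ k s t, Filter.Tendsto (fun n => V n k s t) atTop (𝓝 (V' k s t)))
    (hQ : ∀ s t, Filter.Tendsto (fun n => Q n s t) atTop (𝓝 (Q' s t))) :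
    Filter.Tendsto (fun n => dualObj Pbar x (V n) (Q n)) atTop (𝓝 (dualObj Pbar x V' Q')) := by
  unfold dualObj
  refine tendsto_finset_sum _ fun m _ => (Filter.Tendsto.mul tendsto_const_nhds ?_).sub
    tendsto_const_nhds
  exact ((Complex.continuous_re.tendsto _).comp
      (tendsto_finset_sum _ fun k _ => hV k m m)).add
    ((Complex.continuous_re.tendsto _).comp (hQ m m))

end auxlemmas2

open Filter Topology in
/-- differentiability of the dual function: if the SDR problem is strictly
feasible and for every `x ≥ 0` the subproblem defining `d(x)` attains its infimum at a
unique point `(V*(x), Q*(x))`, then `d` is differentiable on the nonnegative orthant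
(within the orthant), with `(∇d(x))_m = ∑ₖ V*ₖ(x)^{(m,m)} + Q*(x)^{(m,m)} − P̄_m`. -/
theorem stmt15 {M K : ℕ} (hM : 0 < M) (hK : 0 < K)
    (hvec : Fin K → Fin M → ℂ) (σ γbar : Fin K → ℝ) (Cbar Pbar : Fin M → ℝ)
    (hσ : ∀ k, 0 < σ k) (hγ : ∀ k, 0 < γbar k)
    (hC : ∀ m, 0 < Cbar m) (hP : ∀ m, 0 < Pbar m)
    (hstrict : SDRStrictFeasible hvec σ γbar Cbar Pbar)
    (Vstar : EuclideanSpace ℝ (Fin M) → Fin K → Matrix (Fin M) (Fin M) ℂ)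
    (Qstar : EuclideanSpace ℝ (Fin M) → Matrix (Fin M) (Fin M) ℂ)
    (hattain : ∀ x : EuclideanSpace ℝ (Fin M), (∀ m, 0 ≤ x m) →
      SubFeasible hvec σ γbar Cbar (Vstar x) (Qstar x) ∧
      dualObj Pbar x (Vstar x) (Qstar x) = dfun hvec σ γbar Cbar Pbar x ∧
      (∀ (V : Fin K → Matrix (Fin M) (Fin M) ℂ) (Q : Matrix (Fin M) (Fin M) ℂ),
        SubFeasible hvec σ γbar Cbar V Q →
        dualObj Pbar x V Q = dfun hvec σ γbar Cbar Pbar x →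
        V = Vstar x ∧ Q = Qstar x)) :
    ∀ x : EuclideanSpace ℝ (Fin M), (∀ m, 0 ≤ x m) →
      HasGradientWithinAt (dfun hvec σ γbar Cbar Pbar)
        ((EuclideanSpace.equiv (Fin M) ℝ).symm
          (fun m => (∑ k, Vstar x k m m).re + (Qstar x m m).re - Pbar m))
        {y : EuclideanSpace ℝ (Fin M) | ∀ m, 0 ≤ y m} x := by
  intro x hx
  classical
  set S : Set (EuclideanSpace ℝ (Fin M)) := {y : EuclideanSpace ℝ (Fin M) | ∀ m, 0 ≤ y m} with hSdef
  have hxS : x ∈ S := hx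
  obtain ⟨Vb, Qb, ⟨hfb, hpwb⟩, -⟩ := hstrict
  set F : EuclideanSpace ℝ (Fin M) → ℝ := dfun hvec σ γbar Cbar Pbar with hF
  set sY : EuclideanSpace ℝ (Fin M) → Fin M → ℝ :=
    fun y m => (∑ k, Vstar y k m m).re + (Qstar y m m).re with hsY
  set g : EuclideanSpace ℝ (Fin M) → Fin M → ℝ := fun y m => sY y m - Pbar m with hg
  set sb : Fin M → ℝ := fun m => (∑ k, Vb k m m).re + (Qb m m).re with hsb
  have hdiag : ∀ (V : Fin K → Matrix (Fin M) (Fin M) ℂ) (Q : Matrix (Fin M) (Fin M) ℂ),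
      SubFeasible hvec σ γbar Cbar V Q → ∀ m, 0 ≤ (∑ k, V k m m).re + (Q m m).re := by
    intro V Q hVQ m
    have h1 : 0 ≤ (∑ k, V k m m).re := by
      rw [Complex.re_sum]
      exact Finset.sum_nonneg fun k _ => diag_re_nonneg (hVQ.1 k) m
    exact add_nonneg h1 (diag_re_nonneg hVQ.2.1 m)
  have hbdd : ∀ y ∈ S, (-(∑ m, y m * Pbar m)) ∈ lowerBounds
      {v : ℝ | ∃ V Q, SubFeasible hvec σ γbar Cbar V Q ∧ v = dualObj Pbar y V Q} := by
    rintro y hy v ⟨V, Q, hVQ, rfl⟩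
    unfold dualObj
    calc -(∑ m, y m * Pbar m) = ∑ m, -(y m * Pbar m) := by
          rw [Finset.sum_neg_distrib]
      _ ≤ ∑ m, ((1 + y m) * ((∑ k, V k m m).re + (Q m m).re) - y m * Pbar m) := by
          refine Finset.sum_le_sum fun m _ => ?_
          have := mul_nonneg (by have := hy m; dsimp at this ⊢; linarith : (0:ℝ) ≤ 1 + y m)
            (hdiag V Q hVQ m)
          linarith
  have hFle : ∀ y ∈ S, ∀ (V : Fin K → Matrix (Fin M) (Fin M) ℂ)
      (Q : Matrix (Fin M) (Fin M) ℂ), SubFeasible hvec σ γbar Cbar V Q →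
      F y ≤ dualObj Pbar y V Q := by
    intro y hy V Q hVQ
    exact csInf_le ⟨_, hbdd y hy⟩ ⟨V, Q, hVQ, rfl⟩
  have hFeq : ∀ y ∈ S, F y = dualObj Pbar y (Vstar y) (Qstar y) :=
    fun y hy => ((hattain y hy).2.1).symm
  have haff : ∀ (y z : EuclideanSpace ℝ (Fin M)) (V : Fin K → Matrix (Fin M) (Fin M) ℂ)
      (Q : Matrix (Fin M) (Fin M) ℂ),
      dualObj Pbar z V Q = dualObj Pbar y V Q
        + ∑ m, (z m - y m) * ((∑ k, V k m m).re + (Q m m).re - Pbar m) := by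
    intro y z V Q
    unfold dualObj
    rw [← Finset.sum_add_distrib]
    exact Finset.sum_congr rfl fun m _ => by ring
  have hkey : ∀ y ∈ S, ∀ z ∈ S, F z ≤ F y + ∑ m, (z m - y m) * g y m := by
    intro y hy z hz
    calc F z ≤ dualObj Pbar z (Vstar y) (Qstar y) := hFle z hz _ _ (hattain y hy).1
      _ = dualObj Pbar y (Vstar y) (Qstar y) + ∑ m, (z m - y m) * g y m := haff y z _ _
      _ = F y + ∑ m, (z m - y m) * g y m := by rw [hFeq y hy]
  have hsb0 : ∀ m, 0 ≤ sb m := fun m => hdiag Vb Qb hfb m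
  have hsY0 : ∀ y ∈ S, ∀ m, 0 ≤ sY y m := fun y hy m => hdiag _ _ (hattain y hy).1 m
  have hsYb : ∀ y ∈ S, ∀ m, sY y m ≤ ∑ j, (1 + y j) * sb j := by
    intro y hy m
    have h1 : ∑ j, ((1 + y j) * sY y j - y j * Pbar j)
        ≤ ∑ j, ((1 + y j) * sb j - y j * Pbar j) := by
      have h0 := hFle y hy Vb Qb hfb
      rw [hFeq y hy] at h0
      exact h0
    rw [Finset.sum_sub_distrib, Finset.sum_sub_distrib] at h1
    have h2 : ∑ j, (1 + y j) * sY y j ≤ ∑ j, (1 + y j) * sb j := by linarith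
    have h3 : sY y m ≤ (1 + y m) * sY y m :=
      le_mul_of_one_le_left (hsY0 y hy m) (by have := hy m; dsimp at this; linarith)
    have h4 : (1 + y m) * sY y m ≤ ∑ j, (1 + y j) * sY y j :=
      Finset.single_le_sum (f := fun j => (1 + y j) * sY y j)
        (fun j _ => mul_nonneg (by have := hy j; dsimp at this; linarith) (hsY0 y hy j))
        (Finset.mem_univ m)
    linarith
  set C0 : ℝ := ∑ j, (2 + x j) * sb j with hC0
  have hC0nonneg : 0 ≤ C0 :=
    Finset.sum_nonneg fun j _ => mul_nonneg (by have := hx j; linarith) (hsb0 j)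
  have hcoord : ∀ (v : EuclideanSpace ℝ (Fin M)) (m : Fin M), |v m| ≤ ‖v‖ := by
    intro v m
    have h1 : v m = inner (𝕜 := ℝ) (EuclideanSpace.single m (1:ℝ)) v := by
      rw [EuclideanSpace.inner_single_left]; simp
    rw [h1]
    calc |inner (𝕜 := ℝ) (EuclideanSpace.single m (1:ℝ)) v|
        ≤ ‖EuclideanSpace.single m (1:ℝ)‖ * ‖v‖ := abs_real_inner_le_norm _ _
      _ = ‖v‖ := by rw [EuclideanSpace.norm_single]; simp
  have hsYC0 : ∀ y ∈ S, ‖y - x‖ ≤ 1 → ∀ m, sY y m ≤ C0 := by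
    intro y hy hnear m
    refine (hsYb y hy m).trans ?_
    refine Finset.sum_le_sum fun j _ => ?_
    have hyj : y j ≤ x j + 1 := by
      have h2 := hcoord (y - x) j
      have h3 : (y - x) j = y j - x j := rfl
      rw [h3] at h2
      have := (abs_le.mp (h2.trans hnear)).2
      linarith
    exact mul_le_mul_of_nonneg_right (by linarith) (hsb0 j)
  have hgb : ∀ y ∈ S, ‖y - x‖ ≤ 1 → ∀ m, |g y m| ≤ C0 + |Pbar m| := by
    intro y hy hnear m
    have h1 := hsY0 y hy m
    have h2 := hsYC0 y hy hnear m
    rw [hg]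
    dsimp only
    rw [abs_le]
    constructor
    · have := le_abs_self (Pbar m); have := neg_abs_le (Pbar m); linarith
    · have := le_abs_self (Pbar m); have := neg_abs_le (Pbar m); linarith
  have hgcont : Filter.Tendsto (fun y => ∑ m, |g y m - g x m|) (𝓝[S] x) (𝓝 0) := by
    rw [Filter.tendsto_iff_seq_tendsto]
    intro u hu
    have huS : ∀ᶠ n in Filter.atTop, u n ∈ S := hu self_mem_nhdsWithin
    have hux : Filter.Tendsto u Filter.atTop (𝓝 x) := hu.mono_right nhdsWithin_le_nhds
    have hnear : ∀ᶠ n in Filter.atTop, ‖u n - x‖ ≤ 1 := by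
      have h1 := Metric.tendsto_atTop.mp hux 1 one_pos
      obtain ⟨N, hN⟩ := h1
      refine Filter.eventually_atTop.mpr ⟨N, fun n hn => ?_⟩
      have := hN n hn
      rw [dist_eq_norm] at this
      linarith
    apply Filter.tendsto_of_subseq_tendsto
    intro ns hns
    obtain ⟨N1, hN1⟩ := Filter.eventually_atTop.mp (huS.and hnear)
    obtain ⟨N2, hN2⟩ := Filter.eventually_atTop.mp (hns.eventually_ge_atTop N1)
    set w : ℕ → ℕ := fun n => ns (n + N2) with hw
    have hwS : ∀ n, u (w n) ∈ S := fun n => (hN1 _ (hN2 _ (Nat.le_add_left N2 n))).1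
    have hwnear : ∀ n, ‖u (w n) - x‖ ≤ 1 := fun n => (hN1 _ (hN2 _ (Nat.le_add_left N2 n))).2
    have hwtend : Filter.Tendsto (fun n => u (w n)) Filter.atTop (𝓝 x) :=
      hux.comp (hns.comp (tendsto_add_atTop_nat N2))
    have hfw : ∀ n, SubFeasible hvec σ γbar Cbar (Vstar (u (w n))) (Qstar (u (w n))) :=
      fun n => (hattain _ (hwS n)).1
    have hVdiag : ∀ n (k : Fin K) (m : Fin M), (Vstar (u (w n)) k m m).re ≤ C0 := by
      intro n k m
      have h1 : (Vstar (u (w n)) k m m).re ≤ (∑ k', Vstar (u (w n)) k' m m).re := by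
        rw [Complex.re_sum]
        exact Finset.single_le_sum (f := fun k' => (Vstar (u (w n)) k' m m).re)
          (fun k' _ => diag_re_nonneg ((hfw n).1 k') m) (Finset.mem_univ k)
      have h2 : (∑ k', Vstar (u (w n)) k' m m).re ≤ sY (u (w n)) m := by
        have := diag_re_nonneg (hfw n).2.1 m
        rw [hsY]; dsimp only; linarith
      have h3 := hsYC0 _ (hwS n) (hwnear n) m
      linarith
    have hQdiag : ∀ n (m : Fin M), (Qstar (u (w n)) m m).re ≤ C0 := by
      intro n m
      have h1 : 0 ≤ (∑ k', Vstar (u (w n)) k' m m).re := by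
        rw [Complex.re_sum]
        exact Finset.sum_nonneg fun k' _ => diag_re_nonneg ((hfw n).1 k') m
      have h3 := hsYC0 _ (hwS n) (hwnear n) m
      rw [hsY] at h3; dsimp only at h3; linarith
    have hVent : ∀ n (k : Fin K) (s t : Fin M), ‖Vstar (u (w n)) k s t‖ ≤ C0 := by
      intro n k s t
      have := entry_bound ((hfw n).1 k) s t
      have h1 := hVdiag n k s; have h2 := hVdiag n k t
      linarith
    have hQent : ∀ n (s t : Fin M), ‖Qstar (u (w n)) s t‖ ≤ C0 := by
      intro n s t
      have := entry_bound ((hfw n).2.1) s t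
      have h1 := hQdiag n s; have h2 := hQdiag n t
      linarith
    set A1 : Set (Fin K → Fin M → Fin M → ℂ) :=
      Set.univ.pi (fun _ : Fin K => Set.univ.pi fun _ : Fin M =>
        Set.univ.pi fun _ : Fin M => Metric.closedBall (0:ℂ) C0) with hA1
    set A2 : Set (Fin M → Fin M → ℂ) :=
      Set.univ.pi (fun _ : Fin M =>
        Set.univ.pi fun _ : Fin M => Metric.closedBall (0:ℂ) C0) with hA2
    have hTc : IsCompact (A1 ×ˢ A2) := by
      refine IsCompact.prod ?_ ?_
      · exact isCompact_univ_pi fun _ => isCompact_univ_pi fun _ =>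
          isCompact_univ_pi fun _ => isCompact_closedBall _ _
      · exact isCompact_univ_pi fun _ => isCompact_univ_pi fun _ => isCompact_closedBall _ _
    set q : ℕ → (Fin K → Fin M → Fin M → ℂ) × (Fin M → Fin M → ℂ) :=
      fun n => (fun k s t => Vstar (u (w n)) k s t, fun s t => Qstar (u (w n)) s t) with hq
    have hqT : ∀ n, q n ∈ A1 ×ˢ A2 := by
      intro n
      constructor
      · intro k _
        intro s _
        intro t _
        simpa [Metric.mem_closedBall, dist_zero_right] using hVent n k s t
      · intro s _
        intro t _
        simpa [Metric.mem_closedBall, dist_zero_right] using hQent n s t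
    obtain ⟨a, -, φ, hφ, hconv⟩ := hTc.tendsto_subseq hqT
    have hV : ∀ (k : Fin K) (s t : Fin M),
        Filter.Tendsto (fun n => Vstar (u (w (φ n))) k s t) Filter.atTop (𝓝 (a.1 k s t)) := by
      intro k s t
      have h1 : Filter.Tendsto (fun n => (q (φ n)).1) Filter.atTop (𝓝 a.1) :=
        (continuous_fst.tendsto a).comp hconv
      exact tendsto_pi_nhds.mp (tendsto_pi_nhds.mp (tendsto_pi_nhds.mp h1 k) s) t
    have hQt : ∀ (s t : Fin M),
        Filter.Tendsto (fun n => Qstar (u (w (φ n))) s t) Filter.atTop (𝓝 (a.2 s t)) := by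
      intro s t
      have h1 : Filter.Tendsto (fun n => (q (φ n)).2) Filter.atTop (𝓝 a.2) :=
        (continuous_snd.tendsto a).comp hconv
      exact tendsto_pi_nhds.mp (tendsto_pi_nhds.mp h1 s) t
    set V' : Fin K → Matrix (Fin M) (Fin M) ℂ := fun k => Matrix.of (a.1 k) with hV'
    set Q' : Matrix (Fin M) (Fin M) ℂ := Matrix.of a.2 with hQ'
    have hfeas' : SubFeasible hvec σ γbar Cbar V' Q' :=
      subfeasible_limit hvec σ γbar Cbar hV hQt (fun n => hfw (φ n))
    have hwtendp : Filter.Tendsto (fun n => u (w (φ n))) Filter.atTop (𝓝 x) :=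
      hwtend.comp hφ.tendsto_atTop
    have hnorm0 : Filter.Tendsto (fun n => ‖u (w (φ n)) - x‖) Filter.atTop (𝓝 0) := by
      exact tendsto_iff_norm_sub_tendsto_zero.mp hwtendp
    have hd1 : Filter.Tendsto
        (fun n => dualObj Pbar x (Vstar (u (w (φ n)))) (Qstar (u (w (φ n)))))
        Filter.atTop (𝓝 (dualObj Pbar x V' Q')) := dualObj_tendsto Pbar x hV hQt
    have hd2 : Filter.Tendsto
        (fun n => F (u (w (φ n)))
          - dualObj Pbar x (Vstar (u (w (φ n)))) (Qstar (u (w (φ n)))))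
        Filter.atTop (𝓝 0) := by
      have heq : ∀ n, F (u (w (φ n)))
          - dualObj Pbar x (Vstar (u (w (φ n)))) (Qstar (u (w (φ n))))
          = ∑ m, (u (w (φ n)) m - x m) * g (u (w (φ n))) m := by
        intro n
        rw [hFeq _ (hwS (φ n)), haff x (u (w (φ n)))]
        ring
      simp only [heq]
      apply squeeze_zero_norm (a := fun n => ‖u (w (φ n)) - x‖ * ∑ m : Fin M, (C0 + |Pbar m|))
      · intro n
        calc ‖∑ m, (u (w (φ n)) m - x m) * g (u (w (φ n))) m‖
            ≤ ∑ m, ‖(u (w (φ n)) m - x m) * g (u (w (φ n))) m‖ := norm_sum_le _ _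
          _ ≤ ∑ m, ‖u (w (φ n)) - x‖ * (C0 + |Pbar m|) := by
              refine Finset.sum_le_sum fun m _ => ?_
              rw [norm_mul]
              have h1 : ‖u (w (φ n)) m - x m‖ ≤ ‖u (w (φ n)) - x‖ := by
                have h2 := hcoord (u (w (φ n)) - x) m
                have h3 : (u (w (φ n)) - x) m = u (w (φ n)) m - x m := rfl
                rw [h3] at h2
                exact h2
              have h4 := hgb _ (hwS (φ n)) (hwnear (φ n)) m
              exact mul_le_mul h1 h4 (norm_nonneg _) (norm_nonneg _)
          _ = ‖u (w (φ n)) - x‖ * ∑ m : Fin M, (C0 + |Pbar m|) := by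
              rw [Finset.mul_sum]
      · simpa using hnorm0.mul_const (∑ m : Fin M, (C0 + |Pbar m|))
    have hd3 : Filter.Tendsto (fun n => F (u (w (φ n)))) Filter.atTop (𝓝 (F x)) := by
      have hKc : ∀ n, |F (u (w (φ n))) - F x|
          ≤ (∑ m : Fin M, (C0 + |Pbar m|)) * ‖u (w (φ n)) - x‖ := by
        intro n
        set y := u (w (φ n)) with hy
        have hyS := hwS (φ n)
        have h1 := hkey x hxS y hyS
        have h2 := hkey y hyS x hxS
        have hb1 : ∑ m, (y m - x m) * g x m ≤ (∑ m : Fin M, (C0 + |Pbar m|)) * ‖y - x‖ := by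
          rw [Finset.sum_mul]
          refine Finset.sum_le_sum fun m _ => ?_
          have h3 : (y m - x m) * g x m ≤ |(y m - x m) * g x m| := le_abs_self _
          rw [abs_mul] at h3
          have h4 : |y m - x m| ≤ ‖y - x‖ := by
            have h5 := hcoord (y - x) m
            have h6 : (y - x) m = y m - x m := rfl
            rw [h6] at h5; exact h5
          have h7 : |g x m| ≤ C0 + |Pbar m| := hgb x hxS (by simp) m
          nlinarith [abs_nonneg (y m - x m), abs_nonneg (g x m), norm_nonneg (y - x),
            abs_nonneg (Pbar m)]
        have hb2 : ∑ m, (x m - y m) * g y m ≤ (∑ m : Fin M, (C0 + |Pbar m|)) * ‖y - x‖ := by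
          rw [Finset.sum_mul]
          refine Finset.sum_le_sum fun m _ => ?_
          have h3 : (x m - y m) * g y m ≤ |(x m - y m) * g y m| := le_abs_self _
          rw [abs_mul] at h3
          have h4 : |x m - y m| ≤ ‖y - x‖ := by
            have h5 := hcoord (y - x) m
            have h6 : (y - x) m = y m - x m := rfl
            rw [h6] at h5
            rw [abs_sub_comm]
            exact h5
          have h7 : |g y m| ≤ C0 + |Pbar m| := hgb y hyS (hwnear (φ n)) m
          nlinarith [abs_nonneg (x m - y m), abs_nonneg (g y m), norm_nonneg (y - x),
            abs_nonneg (Pbar m)]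
        rw [abs_le]
        constructor <;> linarith
      have h8 : Filter.Tendsto (fun n => F (u (w (φ n))) - F x) Filter.atTop (𝓝 0) := by
        apply squeeze_zero_norm (a := fun n =>
          (∑ m : Fin M, (C0 + |Pbar m|)) * ‖u (w (φ n)) - x‖)
        · intro n
          rw [Real.norm_eq_abs]
          exact hKc n
        · simpa using hnorm0.const_mul (∑ m : Fin M, (C0 + |Pbar m|))
      have h9 := h8.add_const (F x)
      simpa using h9
    have hd4 : Filter.Tendsto (fun n => F (u (w (φ n)))) Filter.atTop
        (𝓝 (0 + dualObj Pbar x V' Q')) := by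
      refine (hd2.add hd1).congr fun n => by ring
    have hvalx : dualObj Pbar x V' Q' = F x := by
      have := tendsto_nhds_unique hd4 hd3
      linarith
    obtain ⟨hV'eq, hQ'eq⟩ := (hattain x hx).2.2 V' Q' hfeas' hvalx
    refine ⟨fun n => φ n + N2, ?_⟩
    have hgm : ∀ m : Fin M, Filter.Tendsto (fun n => g (u (w (φ n))) m)
        Filter.atTop (𝓝 (g x m)) := by
      intro m
      have h1 : Filter.Tendsto (fun n => (∑ k, Vstar (u (w (φ n))) k m m).re)
          Filter.atTop (𝓝 ((∑ k, Vstar x k m m).re)) := by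
        have h2 := (Complex.continuous_re.tendsto _).comp
          (tendsto_finset_sum Finset.univ fun k _ => hV k m m)
        have h3 : (∑ k, a.1 k m m) = ∑ k, Vstar x k m m := by
          refine Finset.sum_congr rfl fun k _ => ?_
          rw [← hV'eq]; rfl
        rw [← h3]
        exact h2
      have h4 : Filter.Tendsto (fun n => (Qstar (u (w (φ n))) m m).re)
          Filter.atTop (𝓝 ((Qstar x m m).re)) := by
        have h5 := (Complex.continuous_re.tendsto _).comp (hQt m m)
        have h6 : a.2 m m = Qstar x m m := by rw [← hQ'eq]; rfl
        rw [← h6]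
        exact h5
      exact (h1.add h4).sub_const (Pbar m)
    have hfin : Filter.Tendsto (fun n => ∑ m, |g (u (w (φ n))) m - g x m|)
        Filter.atTop (𝓝 (∑ m : Fin M, |g x m - g x m|)) :=
      tendsto_finset_sum _ fun m _ =>
        (continuous_abs.tendsto _).comp ((hgm m).sub_const (g x m))
    simpa using hfin
  rw [hasGradientWithinAt_iff_isLittleO]
  have hinner : ∀ y : EuclideanSpace ℝ (Fin M),
      (inner ℝ ((EuclideanSpace.equiv (Fin M) ℝ).symm
        (fun m => (∑ k, Vstar x k m m).re + (Qstar x m m).re - Pbar m)) (y - x) : ℝ)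
      = ∑ m, g x m * (y m - x m) := by
    intro y
    rw [PiLp.inner_apply]
    refine Finset.sum_congr rfl fun m _ => ?_
    simp only [RCLike.inner_apply, conj_trivial]
    rw [mul_comm]; rfl
  rw [Asymptotics.isLittleO_iff]
  intro ε hε
  have hev2 : ∀ᶠ y in 𝓝[S] x, ∑ m, |g y m - g x m| < ε := hgcont.eventually_lt_const hε
  filter_upwards [eventually_mem_nhdsWithin, hev2] with y hyS hyg
  rw [hinner y]
  have hup : F y - F x - ∑ m, g x m * (y m - x m) ≤ 0 := by
    have h1 := hkey x hxS y hyS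
    have h2 : ∑ m, (y m - x m) * g x m = ∑ m, g x m * (y m - x m) :=
      Finset.sum_congr rfl fun m _ => by ring
    rw [h2] at h1
    linarith
  have hlow : -(ε * ‖y - x‖) ≤ F y - F x - ∑ m, g x m * (y m - x m) := by
    have h2 := hkey y hyS x hxS
    have h3 : -(ε * ‖y - x‖) ≤ ∑ m, (y m - x m) * (g y m - g x m) := by
      have h4 : ∀ m ∈ Finset.univ,
          -(|g y m - g x m| * ‖y - x‖) ≤ (y m - x m) * (g y m - g x m) := by
        intro m _
        have h5 : |(y m - x m) * (g y m - g x m)| ≤ ‖y - x‖ * |g y m - g x m| := by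
          rw [abs_mul]
          have h6 := hcoord (y - x) m
          have h7 : (y - x) m = y m - x m := rfl
          rw [h7] at h6
          exact mul_le_mul_of_nonneg_right h6 (abs_nonneg _)
        have h8 := neg_abs_le ((y m - x m) * (g y m - g x m))
        nlinarith [abs_nonneg (g y m - g x m)]
      have h8 := Finset.sum_le_sum h4
      rw [Finset.sum_neg_distrib, ← Finset.sum_mul] at h8
      have h9 : (∑ m : Fin M, |g y m - g x m|) * ‖y - x‖ ≤ ε * ‖y - x‖ :=
        mul_le_mul_of_nonneg_right hyg.le (norm_nonneg _)
      linarith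
    have h10 : ∑ m, (x m - y m) * g y m + ∑ m, g x m * (y m - x m)
        + ∑ m, (y m - x m) * (g y m - g x m) = 0 := by
      rw [← Finset.sum_add_distrib, ← Finset.sum_add_distrib]
      exact Finset.sum_eq_zero fun m _ => by ring
    linarith
  rw [Real.norm_eq_abs, abs_le]
  have hnn : 0 ≤ ε * ‖y - x‖ := mul_nonneg hε.le (norm_nonneg _)
  exact ⟨by linarith, by linarith⟩

end
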